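/- arXiv:2308.16193 — 2 statements merged into one kernel-verified Lean document; each statement's English description precedes it below -/
import Mathlib

section
/- Let ν₀ > 0, ε > 0, and let N : ℝ → ℝ be continuously differentiable with N(0) = 0, N'(0) = 0, and |N''| ≤ K on a neighborhood of 0 (so |N(x)| ≤ (K/2)x² for |x| small). Consider the integral equation η̂(y) = e^{-a y} η̂₀ + (1/ε) ∫_0^y e^{-a(y−s)} N(η̂(s)) ds for y ≥ 0, where a ≥ ν₀/ε. If |η̂₀| is sufficiently small (depending on ν₀, ε, K), then there exists a unique continuous solution η̂ on [0,∞) satisfying |η̂(y)| ≤ C |η̂₀| e^{-(ν₀/ε) y} for all y ≥ 0, for some constant C > 0. -/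
open Set intervalIntegral BoundedContinuousFunction

lemma BL_int_exp (p c y : ℝ) (hc : c ≠ 0) :
    ∫ s in (0:ℝ)..y, Real.exp (p + c*s) = (Real.exp (p + c*y) - Real.exp p)/c := by
  have hder : ∀ s ∈ Set.uIcc (0:ℝ) y,
      HasDerivAt (fun s => Real.exp (p + c*s)/c) (Real.exp (p + c*s)) s := by
    intro s _
    have h1 : HasDerivAt (fun s : ℝ => p + c*s) c s := by
      simpa using ((hasDerivAt_id s).const_mul c).const_add p
    have h2 := (h1.exp).div_const c
    rw [mul_div_cancel_right₀ _ hc] at h2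
    exact h2
  rw [intervalIntegral.integral_eq_sub_of_hasDerivAt hder
    ((Real.continuous_exp.comp (by continuity)).intervalIntegrable 0 y)]
  simp [sub_div]

lemma BL_int_exp_le (p c y : ℝ) (hc : 0 < c) :
    ∫ s in (0:ℝ)..y, Real.exp (p + c*s) ≤ Real.exp (p + c*y)/c := by
  rw [BL_int_exp p c y hc.ne']
  have h1 : Real.exp (p + c*y) - Real.exp p ≤ Real.exp (p + c*y) :=
    sub_le_self _ (Real.exp_pos p).le
  exact (div_le_div_iff_of_pos_right hc).mpr h1

lemma BL_int_exp_neg_le (c y : ℝ) (hc : 0 < c) :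
    ∫ s in (0:ℝ)..y, Real.exp (-(c*s)) ≤ 1/c := by
  have h : ∀ s : ℝ, Real.exp (-(c*s)) = Real.exp (0 + (-c)*s) := by intro s; ring_nf
  rw [show (fun s => Real.exp (-(c*s))) = fun s => Real.exp (0 + (-c)*s) from funext h] at *
  rw [BL_int_exp 0 (-c) y (neg_ne_zero.mpr hc.ne')]
  have he : Real.exp (0 + -c*y) = Real.exp (-(c*y)) := by ring_nf
  rw [he, Real.exp_zero]
  have h2 : (Real.exp (-(c*y)) - 1)/(-c) = (1 - Real.exp (-(c*y)))/c := by
    rw [div_neg, eq_div_iff hc.ne', neg_mul, div_mul_cancel₀ _ hc.ne']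
    ring
  rw [h2]
  have h3 : 1 - Real.exp (-(c*y)) ≤ 1 := sub_le_self _ (Real.exp_pos _).le
  exact (div_le_div_iff_of_pos_right hc).mpr h3

lemma BL_abs_int_le {f M : ℝ → ℝ} {y : ℝ} (hy : 0 ≤ y) (hf : Continuous f)
    (hM : Continuous M) (h : ∀ s ∈ Set.Icc (0:ℝ) y, |f s| ≤ M s) :
    |∫ s in (0:ℝ)..y, f s| ≤ ∫ s in (0:ℝ)..y, M s :=
  (intervalIntegral.abs_integral_le_integral_abs hy).trans
    (intervalIntegral.integral_mono_on hy (hf.abs.intervalIntegrable _ _)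
      (hM.intervalIntegrable _ _) h)

lemma BL_lip (N : ℝ → ℝ) (hN1 : ContDiff ℝ 1 N) (hN'0 : deriv N 0 = 0) {L : ℝ} (hL : 0 < L) :
    ∃ ρ₁ > (0:ℝ), ∀ x₁ x₂ : ℝ, |x₁| ≤ ρ₁ → |x₂| ≤ ρ₁ → |N x₁ - N x₂| ≤ L * |x₁ - x₂| := by
  have hdc : Continuous (deriv N) := hN1.continuous_deriv le_rfl
  obtain ⟨δ, hδ, hball⟩ := Metric.continuousAt_iff.mp (hdc.continuousAt (x := 0)) L hL
  refine ⟨δ/2, by linarith, ?_⟩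
  intro x₁ x₂ h1 h2
  have hd : ∀ x ∈ Set.Icc (-(δ/2)) (δ/2), ‖deriv N x‖ ≤ L := by
    intro x hx
    have hx' : |x| ≤ δ/2 := abs_le.mpr ⟨by linarith [hx.1], hx.2⟩
    have hxδ : dist x 0 < δ := by rw [Real.dist_eq, sub_zero]; exact lt_of_le_of_lt hx' (by linarith)
    have := hball hxδ
    rw [Real.dist_eq, hN'0, sub_zero] at this
    exact le_of_lt this
  have hdiff : ∀ x ∈ Set.Icc (-(δ/2)) (δ/2), DifferentiableAt ℝ N x :=
    fun x _ => (hN1.differentiable one_ne_zero).differentiableAt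
  have hm : ∀ x : ℝ, |x| ≤ δ/2 → x ∈ Set.Icc (-(δ/2)) (δ/2) := by
    intro x hx
    exact Set.mem_Icc.mpr ⟨(abs_le.mp hx).1, (abs_le.mp hx).2⟩
  have h := Convex.norm_image_sub_le_of_norm_deriv_le hdiff hd (convex_Icc _ _)
      (hm x₂ h2) (hm x₁ h1)
  simpa [Real.norm_eq_abs] using h

/-- The substitution `η(s) = e^{-b' s} g(s)`. -/
noncomputable def BLu (b' : ℝ) (g : BoundedContinuousFunction NNReal ℝ) : ℝ → ℝ :=
  fun s => Real.exp (-(b'*s)) * g (Real.toNNReal s)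

noncomputable def BLf (b' a : ℝ) (N : ℝ → ℝ) (g : BoundedContinuousFunction NNReal ℝ) : ℝ → ℝ :=
  fun s => Real.exp (a*s) * N (BLu b' g s)

noncomputable def BLT (b' a ε η₀ : ℝ) (N : ℝ → ℝ) (g : BoundedContinuousFunction NNReal ℝ) :
    NNReal → ℝ :=
  fun y => Real.exp ((b'-a)*(y:ℝ)) * (η₀ + ε⁻¹ * ∫ s in (0:ℝ)..(y:ℝ), BLf b' a N g s)

lemma BLu_cont (b' : ℝ) (g : BoundedContinuousFunction NNReal ℝ) : Continuous (BLu b' g) :=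
  (Real.continuous_exp.comp (by continuity)).mul (g.continuous.comp continuous_real_toNNReal)

lemma BLf_cont (b' a : ℝ) {N : ℝ → ℝ} (hN : Continuous N)
    (g : BoundedContinuousFunction NNReal ℝ) : Continuous (BLf b' a N g) :=
  (Real.continuous_exp.comp (by continuity)).mul (hN.comp (BLu_cont b' g))

lemma BLT_cont (b' a ε η₀ : ℝ) {N : ℝ → ℝ} (hN : Continuous N)
    (g : BoundedContinuousFunction NNReal ℝ) : Continuous (BLT b' a ε η₀ N g) := by
  apply Continuous.mul
  · exact Real.continuous_exp.comp (continuous_const.mul NNReal.continuous_coe)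
  · exact continuous_const.add (continuous_const.mul
      ((intervalIntegral.continuous_primitive
        (fun c d => (BLf_cont b' a hN g).intervalIntegrable c d) 0).comp NNReal.continuous_coe))

lemma BLu_le (b' : ℝ) (g : BoundedContinuousFunction NNReal ℝ) (s : ℝ) :
    |BLu b' g s| ≤ Real.exp (-(b'*s)) * ‖g‖ := by
  unfold BLu
  rw [abs_mul, abs_of_pos (Real.exp_pos _)]
  exact mul_le_mul_of_nonneg_left
    ((Real.norm_eq_abs _ ▸ g.norm_coe_le_norm (Real.toNNReal s))) (Real.exp_pos _).le

lemma BLu_le' {b' : ℝ} (hb' : 0 ≤ b') (g : BoundedContinuousFunction NNReal ℝ) {s : ℝ}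
    (hs : 0 ≤ s) : |BLu b' g s| ≤ ‖g‖ := by
  have h1 := BLu_le b' g s
  have h2 : Real.exp (-(b'*s)) ≤ 1 := Real.exp_le_one_iff.mpr (by nlinarith)
  nlinarith [norm_nonneg g, Real.exp_pos (-(b'*s))]

set_option maxHeartbeats 2000000 in
theorem stmt_9 (ν₀ ε K : ℝ) (hν₀ : 0 < ν₀) (hε : 0 < ε) (hK : 0 < K)
    (N : ℝ → ℝ) (hN1 : ContDiff ℝ 1 N) (hN0 : N 0 = 0) (hN'0 : deriv N 0 = 0)
    (hquad : ∃ ρ > (0:ℝ), ∀ x : ℝ, |x| ≤ ρ → |N x| ≤ (K/2) * x^2)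
    (a : ℝ) (ha : ν₀ / ε ≤ a) :
    ∃ d > (0:ℝ), ∃ C > (0:ℝ), ∀ η₀ : ℝ, |η₀| ≤ d →
      ∃ η : ℝ → ℝ, ContinuousOn η (Set.Ici 0) ∧
        (∀ y ≥ (0:ℝ), η y = Real.exp (-a*y) * η₀ +
            (1/ε) * ∫ s in (0:ℝ)..y, Real.exp (-a*(y-s)) * N (η s)) ∧
        (∀ y ≥ (0:ℝ), |η y| ≤ C * |η₀| * Real.exp (-(ν₀/ε) * y)) ∧
        ∀ ζ : ℝ → ℝ, ContinuousOn ζ (Set.Ici 0) →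
          (∀ y ≥ (0:ℝ), ζ y = Real.exp (-a*y) * η₀ +
              (1/ε) * ∫ s in (0:ℝ)..y, Real.exp (-a*(y-s)) * N (ζ s)) →
          (∀ y ≥ (0:ℝ), |ζ y| ≤ C * |η₀| * Real.exp (-(ν₀/ε) * y)) →
          Set.EqOn ζ η (Set.Ici 0) := by
  obtain ⟨ρ, hρ, hq⟩ := hquad
  have hNc : Continuous N := hN1.continuous
  have hεne : ε ≠ 0 := hε.ne'
  set b : ℝ := ν₀/ε with hbdef
  have hb : 0 < b := div_pos hν₀ hε
  set b' : ℝ := 3*b/4 with hb'def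
  have hb' : 0 < b' := by rw [hb'def]; linarith
  have hb'ne : b' ≠ 0 := ne_of_gt (by rw [hb'def]; linarith)
  have hab : b ≤ a := ha
  have hb'b : b' ≤ b := by rw [hb'def]; linarith
  have hb'a : b' ≤ a := by linarith
  have hgap : b/4 ≤ a - b' := by rw [hb'def]; linarith
  have hgap0 : 0 < a - b' := lt_of_lt_of_le (by linarith) hgap
  set L : ℝ := ε*b/8 with hLdef
  have hL : 0 < L := by rw [hLdef]; positivity
  obtain ⟨ρ₁, hρ₁, hLip⟩ := BL_lip N hN1 hN'0 hL
  set r : ℝ := min (min ρ ρ₁) (ε*b'/K) with hrdef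
  have hr : 0 < r := lt_min (lt_min hρ hρ₁) (by positivity)
  have hrρ : r ≤ ρ := (min_le_left _ _).trans (min_le_left _ _)
  have hrρ₁ : r ≤ ρ₁ := (min_le_left _ _).trans (min_le_right _ _)
  have hrK : K*r ≤ ε*b' := by
    have h := min_le_right (min ρ ρ₁) (ε*b'/K)
    rw [← hrdef] at h
    rw [le_div_iff₀ hK] at h
    linarith [h]
  set d : ℝ := min (r/2) (ε*b/(4*K)) with hddef
  have hd : 0 < d := lt_min (by linarith) (by positivity)
  refine ⟨d, hd, 2, by norm_num, ?_⟩
  intro η₀ hη₀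
  have hη₀r : |η₀| ≤ r/2 := hη₀.trans (min_le_left _ _)
  have hη₀b : 4*K*|η₀| ≤ ε*b := by
    have h := hη₀.trans (min_le_right _ _)
    rw [le_div_iff₀ (by positivity : (0:ℝ) < 4*K)] at h
    linarith
  -- the pointwise self-map estimate
  have hself : ∀ g : BoundedContinuousFunction NNReal ℝ, ‖g‖ ≤ r → ∀ y : NNReal,
      |BLT b' a ε η₀ N g y| ≤ |η₀| + ε⁻¹ * (K*r*‖g‖/2) * (1/b') := by
    intro g hg y
    have hY : (0:ℝ) ≤ (y:ℝ) := y.2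
    have hfc := BLf_cont b' a hNc g
    have key : ∀ s ∈ Set.Icc (0:ℝ) (y:ℝ),
        |Real.exp ((b'-a)*(y:ℝ)) * BLf b' a N g s| ≤ (K*r*‖g‖/2) * Real.exp (-(b'*s)) := by
      intro s hs
      have hs0 : (0:ℝ) ≤ s := hs.1
      have hu1 := BLu_le b' g s
      have hu2 := BLu_le' hb'.le g hs0
      have hur : |BLu b' g s| ≤ r := hu2.trans hg
      have hNu : |N (BLu b' g s)| ≤ (K/2) * (BLu b' g s)^2 := hq _ (hur.trans hrρ)
      have hu3 : |BLu b' g s| ≤ Real.exp (-(b'*s)) * r :=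
        hu1.trans (mul_le_mul_of_nonneg_left hg (Real.exp_pos _).le)
      have husq : (BLu b' g s)^2 ≤ (Real.exp (-(b'*s)) * ‖g‖) * (Real.exp (-(b'*s)) * r) := by
        nlinarith [sq_abs (BLu b' g s), abs_nonneg (BLu b' g s),
          mul_le_mul hu1 hu3 (abs_nonneg _) (by positivity)]
      have e1 : |Real.exp ((b'-a)*(y:ℝ)) * BLf b' a N g s|
          = Real.exp ((b'-a)*(y:ℝ)) * Real.exp (a*s) * |N (BLu b' g s)| := by
        show |Real.exp ((b'-a)*(y:ℝ)) * (Real.exp (a*s) * N (BLu b' g s))| = _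
        rw [abs_mul, abs_mul, abs_of_pos (Real.exp_pos _), abs_of_pos (Real.exp_pos _),
          mul_assoc]
      rw [e1]
      calc Real.exp ((b'-a)*(y:ℝ)) * Real.exp (a*s) * |N (BLu b' g s)|
          ≤ Real.exp ((b'-a)*(y:ℝ)) * Real.exp (a*s)
            * ((K/2) * ((Real.exp (-(b'*s)) * ‖g‖) * (Real.exp (-(b'*s)) * r))) := by
            refine mul_le_mul_of_nonneg_left (hNu.trans ?_) (by positivity)
            exact mul_le_mul_of_nonneg_left husq (by positivity)
        _ = (K*r*‖g‖/2) * (Real.exp ((b'-a)*(y:ℝ)) * Real.exp (a*s)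
              * (Real.exp (-(b'*s)) * Real.exp (-(b'*s)))) := by ring
        _ ≤ (K*r*‖g‖/2) * Real.exp (-(b'*s)) := by
            refine mul_le_mul_of_nonneg_left ?_ (by positivity)
            rw [← Real.exp_add, ← Real.exp_add, ← Real.exp_add]
            refine Real.exp_le_exp.mpr ?_
            nlinarith [mul_nonneg (sub_nonneg.mpr hs.2) (sub_nonneg.mpr hb'a)]
    have hIb : |∫ s in (0:ℝ)..(y:ℝ), Real.exp ((b'-a)*(y:ℝ)) * BLf b' a N g s|
        ≤ (K*r*‖g‖/2) * (1/b') := by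
      refine (BL_abs_int_le hY (continuous_const.mul hfc)
        (continuous_const.mul (Real.continuous_exp.comp
          ((continuous_const.mul continuous_id).neg))) key).trans ?_
      show ∫ s in (0:ℝ)..(y:ℝ), (K*r*‖g‖/2) * Real.exp (-(b'*s)) ≤ _
      rw [intervalIntegral.integral_const_mul]
      exact mul_le_mul_of_nonneg_left (BL_int_exp_neg_le b' (y:ℝ) hb') (by positivity)
    have hIb' : Real.exp ((b'-a)*(y:ℝ)) * |∫ s in (0:ℝ)..(y:ℝ), BLf b' a N g s|
        ≤ (K*r*‖g‖/2) * (1/b') := by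
      have he2 : Real.exp ((b'-a)*(y:ℝ)) * |∫ s in (0:ℝ)..(y:ℝ), BLf b' a N g s|
          = |∫ s in (0:ℝ)..(y:ℝ), Real.exp ((b'-a)*(y:ℝ)) * BLf b' a N g s| := by
        rw [intervalIntegral.integral_const_mul, abs_mul, abs_of_pos (Real.exp_pos _)]
      rw [he2]; exact hIb
    have hee : Real.exp ((b'-a)*(y:ℝ)) ≤ 1 := Real.exp_le_one_iff.mpr (by nlinarith)
    have h0 : |BLT b' a ε η₀ N g y| ≤ Real.exp ((b'-a)*(y:ℝ))*|η₀|
        + ε⁻¹*(Real.exp ((b'-a)*(y:ℝ)) * |∫ s in (0:ℝ)..(y:ℝ), BLf b' a N g s|) := by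
      show |Real.exp ((b'-a)*(y:ℝ)) * (η₀ + ε⁻¹ * ∫ s in (0:ℝ)..(y:ℝ), BLf b' a N g s)| ≤ _
      rw [abs_mul, abs_of_pos (Real.exp_pos _)]
      have h2 : |η₀ + ε⁻¹ * ∫ s in (0:ℝ)..(y:ℝ), BLf b' a N g s|
          ≤ |η₀| + ε⁻¹ * |∫ s in (0:ℝ)..(y:ℝ), BLf b' a N g s| := by
        refine (abs_add_le _ _).trans ?_
        rw [abs_mul, abs_of_pos (inv_pos.mpr hε)]
      calc Real.exp ((b'-a)*(y:ℝ)) * |η₀ + ε⁻¹ * ∫ s in (0:ℝ)..(y:ℝ), BLf b' a N g s|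
          ≤ Real.exp ((b'-a)*(y:ℝ))
            * (|η₀| + ε⁻¹ * |∫ s in (0:ℝ)..(y:ℝ), BLf b' a N g s|) :=
            mul_le_mul_of_nonneg_left h2 (Real.exp_pos _).le
        _ = _ := by ring
    refine h0.trans ?_
    have h3 : Real.exp ((b'-a)*(y:ℝ))*|η₀| ≤ |η₀| := by nlinarith [abs_nonneg η₀]
    have h4 : ε⁻¹*(Real.exp ((b'-a)*(y:ℝ)) * |∫ s in (0:ℝ)..(y:ℝ), BLf b' a N g s|)
        ≤ ε⁻¹ * ((K*r*‖g‖/2) * (1/b')) :=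
      mul_le_mul_of_nonneg_left hIb' (by positivity)
    have h5 : ε⁻¹ * ((K*r*‖g‖/2) * (1/b')) = ε⁻¹ * (K*r*‖g‖/2) * (1/b') := by ring
    linarith [h4, h5.le]
  -- the contraction estimate
  have hcontr : ∀ g₁ g₂ : BoundedContinuousFunction NNReal ℝ, ‖g₁‖ ≤ r → ‖g₂‖ ≤ r →
      ∀ y : NNReal, |BLT b' a ε η₀ N g₁ y - BLT b' a ε η₀ N g₂ y| ≤ (1/2) * dist g₁ g₂ := by
    intro g₁ g₂ h1 h2 y
    have hY : (0:ℝ) ≤ (y:ℝ) := y.2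
    have hD0 : (0:ℝ) ≤ dist g₁ g₂ := dist_nonneg
    have key : ∀ s ∈ Set.Icc (0:ℝ) (y:ℝ),
        |Real.exp ((b'-a)*(y:ℝ)) * (BLf b' a N g₁ s - BLf b' a N g₂ s)|
          ≤ (L * dist g₁ g₂) * Real.exp ((b'-a)*(y:ℝ) + (a-b')*s) := by
      intro s hs
      have hs0 : (0:ℝ) ≤ s := hs.1
      have hu1 : |BLu b' g₁ s| ≤ ρ₁ := ((BLu_le' hb'.le g₁ hs0).trans h1).trans hrρ₁
      have hu2 : |BLu b' g₂ s| ≤ ρ₁ := ((BLu_le' hb'.le g₂ hs0).trans h2).trans hrρ₁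
      have hNd : |N (BLu b' g₁ s) - N (BLu b' g₂ s)| ≤ L * |BLu b' g₁ s - BLu b' g₂ s| :=
        hLip _ _ hu1 hu2
      have hud : |BLu b' g₁ s - BLu b' g₂ s|
          = Real.exp (-(b'*s)) * |g₁ (Real.toNNReal s) - g₂ (Real.toNNReal s)| := by
        show |Real.exp (-(b'*s)) * (g₁ (Real.toNNReal s)) - Real.exp (-(b'*s)) * (g₂ (Real.toNNReal s))| = _
        rw [← mul_sub, abs_mul, abs_of_pos (Real.exp_pos _)]
      have hgd : |g₁ (Real.toNNReal s) - g₂ (Real.toNNReal s)| ≤ dist g₁ g₂ := by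
        have h := BoundedContinuousFunction.dist_coe_le_dist (f := g₁) (g := g₂) (Real.toNNReal s)
        rwa [Real.dist_eq] at h
      have hN2 : |N (BLu b' g₁ s) - N (BLu b' g₂ s)| ≤ L * (Real.exp (-(b'*s)) * dist g₁ g₂) := by
        refine hNd.trans ?_
        rw [hud]
        exact mul_le_mul_of_nonneg_left
          (mul_le_mul_of_nonneg_left hgd (Real.exp_pos _).le) hL.le
      have e1 : Real.exp ((b'-a)*(y:ℝ)) * (BLf b' a N g₁ s - BLf b' a N g₂ s)
          = Real.exp ((b'-a)*(y:ℝ)) * (Real.exp (a*s) * (N (BLu b' g₁ s) - N (BLu b' g₂ s))) := by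
        show Real.exp ((b'-a)*(y:ℝ)) * (Real.exp (a*s) * N (BLu b' g₁ s)
          - Real.exp (a*s) * N (BLu b' g₂ s)) = _
        ring
      rw [e1, abs_mul, abs_mul, abs_of_pos (Real.exp_pos _), abs_of_pos (Real.exp_pos _)]
      calc Real.exp ((b'-a)*(y:ℝ)) * (Real.exp (a*s) * |N (BLu b' g₁ s) - N (BLu b' g₂ s)|)
          ≤ Real.exp ((b'-a)*(y:ℝ)) * (Real.exp (a*s) * (L * (Real.exp (-(b'*s)) * dist g₁ g₂))) := by
            refine mul_le_mul_of_nonneg_left ?_ (Real.exp_pos _).le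
            exact mul_le_mul_of_nonneg_left hN2 (Real.exp_pos _).le
        _ = (L * dist g₁ g₂) * (Real.exp ((b'-a)*(y:ℝ)) * Real.exp (a*s) * Real.exp (-(b'*s))) := by
            ring
        _ = (L * dist g₁ g₂) * Real.exp ((b'-a)*(y:ℝ) + (a-b')*s) := by
            rw [← Real.exp_add, ← Real.exp_add]
            congr 1
            ring
    have hIb : |∫ s in (0:ℝ)..(y:ℝ), Real.exp ((b'-a)*(y:ℝ)) * (BLf b' a N g₁ s - BLf b' a N g₂ s)|
        ≤ (L * dist g₁ g₂) * (1/(a-b')) := by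
      refine (BL_abs_int_le hY
        (continuous_const.mul ((BLf_cont b' a hNc g₁).sub (BLf_cont b' a hNc g₂)))
        (continuous_const.mul (Real.continuous_exp.comp
          (continuous_const.add (continuous_const.mul continuous_id)))) key).trans ?_
      show ∫ s in (0:ℝ)..(y:ℝ), (L * dist g₁ g₂) * Real.exp ((b'-a)*(y:ℝ) + (a-b')*s) ≤ _
      rw [intervalIntegral.integral_const_mul]
      have h3 := BL_int_exp_le ((b'-a)*(y:ℝ)) (a-b') (y:ℝ) hgap0
      have h4 : Real.exp ((b'-a)*(y:ℝ) + (a-b')*(y:ℝ)) = 1 := by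
        rw [show (b'-a)*(y:ℝ)+(a-b')*(y:ℝ) = 0 by ring, Real.exp_zero]
      rw [h4] at h3
      exact mul_le_mul_of_nonneg_left h3 (by positivity)
    have e2 : BLT b' a ε η₀ N g₁ y - BLT b' a ε η₀ N g₂ y
        = ε⁻¹ * ∫ s in (0:ℝ)..(y:ℝ), Real.exp ((b'-a)*(y:ℝ)) * (BLf b' a N g₁ s - BLf b' a N g₂ s) := by
      show Real.exp ((b'-a)*(y:ℝ)) * (η₀ + ε⁻¹ * ∫ s in (0:ℝ)..(y:ℝ), BLf b' a N g₁ s)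
          - Real.exp ((b'-a)*(y:ℝ)) * (η₀ + ε⁻¹ * ∫ s in (0:ℝ)..(y:ℝ), BLf b' a N g₂ s) = _
      rw [intervalIntegral.integral_const_mul, intervalIntegral.integral_sub
        ((BLf_cont b' a hNc g₁).intervalIntegrable _ _)
        ((BLf_cont b' a hNc g₂).intervalIntegrable _ _)]
      ring
    rw [e2, abs_mul, abs_of_pos (inv_pos.mpr hε)]
    have h5 : ε⁻¹ * |∫ s in (0:ℝ)..(y:ℝ), Real.exp ((b'-a)*(y:ℝ)) * (BLf b' a N g₁ s - BLf b' a N g₂ s)|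
        ≤ ε⁻¹ * ((L * dist g₁ g₂) * (1/(a-b'))) :=
      mul_le_mul_of_nonneg_left hIb (by positivity)
    refine h5.trans ?_
    have hane : a - b' ≠ 0 := hgap0.ne'
    have h6 : ε⁻¹ * ((L * dist g₁ g₂) * (1/(a-b'))) = (L * dist g₁ g₂)/(ε*(a-b')) := by
      field_simp
    rw [h6, div_le_iff₀ (by positivity)]
    have h7 : L = ε*b/8 := rfl
    nlinarith [mul_le_mul_of_nonneg_left hgap (mul_nonneg hε.le hD0), hD0, hgap0, hε]
  -- self-map final bound
  have hhalf : ∀ gn : ℝ, 0 ≤ gn → gn ≤ r → |η₀| + ε⁻¹ * (K*r*gn/2) * (1/b') ≤ r := by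
    intro gn h0 h1
    have he : ε⁻¹ * (K*r*gn/2) * (1/b') = (K*r*gn)/(2*(ε*b')) := by
      field_simp
    rw [he]
    have h2 : K*r*gn ≤ (ε*b')*r := by
      nlinarith [mul_le_mul_of_nonneg_right hrK h0,
        mul_le_mul_of_nonneg_left h1 (by positivity : (0:ℝ) ≤ ε*b')]
    have h3 : (K*r*gn)/(2*(ε*b')) ≤ ((ε*b')*r)/(2*(ε*b')) :=
      (div_le_div_iff_of_pos_right (by positivity)).mpr h2
    have h4 : ((ε*b')*r)/(2*(ε*b')) = r/2 := by
      field_simp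
    rw [h4] at h3
    linarith
  -- the ball and the contraction map
  haveI : Nonempty (Metric.closedBall (0 : BoundedContinuousFunction NNReal ℝ) r) :=
    ⟨⟨0, Metric.mem_closedBall_self hr.le⟩⟩
  haveI : CompleteSpace (Metric.closedBall (0 : BoundedContinuousFunction NNReal ℝ) r) :=
    Metric.isClosed_closedBall.completeSpace_coe
  have hgnorm : ∀ g : Metric.closedBall (0 : BoundedContinuousFunction NNReal ℝ) r,
      ‖(g : BoundedContinuousFunction NNReal ℝ)‖ ≤ r := by
    intro g
    have := g.2
    rwa [Metric.mem_closedBall, dist_zero_right] at this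
  set Tb : Metric.closedBall (0 : BoundedContinuousFunction NNReal ℝ) r →
      Metric.closedBall (0 : BoundedContinuousFunction NNReal ℝ) r := fun g =>
    ⟨BoundedContinuousFunction.ofNormedAddCommGroup (BLT b' a ε η₀ N g.1)
        (BLT_cont b' a ε η₀ hNc g.1) r
        (fun y => by
          rw [Real.norm_eq_abs]
          exact (hself g.1 (hgnorm g) y).trans
            (hhalf ‖g.1‖ (norm_nonneg _) (hgnorm g))),
      by
        rw [Metric.mem_closedBall, dist_zero_right]
        refine (BoundedContinuousFunction.norm_le hr.le).mpr (fun y => ?_)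
        rw [Real.norm_eq_abs]
        simp only [BoundedContinuousFunction.coe_ofNormedAddCommGroup]
        exact (hself g.1 (hgnorm g) y).trans (hhalf ‖g.1‖ (norm_nonneg _) (hgnorm g))⟩
    with hTbdef
  have hTbcoe : ∀ g, ((Tb g : BoundedContinuousFunction NNReal ℝ) : NNReal → ℝ)
      = BLT b' a ε η₀ N g.1 := by
    intro g
    rw [hTbdef]
    rfl
  have hcw : ContractingWith (1/2 : NNReal) Tb := by
    constructor
    · exact one_half_lt_one
    · apply LipschitzWith.of_dist_le_mul
      intro g₁ g₂
      rw [Subtype.dist_eq]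
      have hc : ((1/2 : NNReal) : ℝ) = 1/2 := by norm_num
      rw [hc]
      refine (BoundedContinuousFunction.dist_le (by positivity)).mpr (fun y => ?_)
      rw [Real.dist_eq]
      have h1 := congrFun (hTbcoe g₁) y
      have h2 := congrFun (hTbcoe g₂) y
      rw [h1, h2]
      exact hcontr g₁.1 g₂.1 (hgnorm g₁) (hgnorm g₂) y
  set g : BoundedContinuousFunction NNReal ℝ := (hcw.fixedPoint Tb).1 with hgdef
  have hgr : ‖g‖ ≤ r := hgnorm _
  have hfix : ∀ y, BLT b' a ε η₀ N g y = g y := by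
    intro y
    have h := hcw.fixedPoint_isFixedPt
    have h2 := congrArg (fun G : Metric.closedBall (0 : BoundedContinuousFunction NNReal ℝ) r =>
      ((G : BoundedContinuousFunction NNReal ℝ) : NNReal → ℝ) y) h
    rw [← h2]
    exact (congrFun (hTbcoe _) y)
  -- norm of g is at most 2|η₀|
  have hg2 : ‖g‖ ≤ 2*|η₀| := by
    have h1 : ‖g‖ ≤ |η₀| + ε⁻¹ * (K*r*‖g‖/2) * (1/b') := by
      refine (BoundedContinuousFunction.norm_le (by positivity)).mpr (fun y => ?_)
      rw [Real.norm_eq_abs, ← hfix y]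
      exact hself g hgr y
    have h2 : ε⁻¹ * (K*r*‖g‖/2) * (1/b') ≤ ‖g‖/2 := by
      have he : ε⁻¹ * (K*r*‖g‖/2) * (1/b') = (K*r*‖g‖)/(2*(ε*b')) := by
        field_simp
      rw [he]
      have h3 : K*r*‖g‖ ≤ (ε*b')*‖g‖ :=
        mul_le_mul_of_nonneg_right hrK (norm_nonneg g)
      have h4 : (K*r*‖g‖)/(2*(ε*b')) ≤ ((ε*b')*‖g‖)/(2*(ε*b')) :=
        (div_le_div_iff_of_pos_right (by positivity)).mpr h3
      have h5 : ((ε*b')*‖g‖)/(2*(ε*b')) = ‖g‖/2 := by field_simp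
      rw [h5] at h4
      exact h4
    linarith
  -- the exponential-shift identity used twice
  have hshift : ∀ (w : ℝ → ℝ) (y : ℝ),
      ∫ s in (0:ℝ)..y, Real.exp (-a*(y-s)) * w s
        = Real.exp (-(a*y)) * ∫ s in (0:ℝ)..y, Real.exp (a*s) * w s := by
    intro w y
    rw [← intervalIntegral.integral_const_mul]
    apply intervalIntegral.integral_congr
    intro s _
    show Real.exp (-a*(y-s)) * w s = Real.exp (-(a*y)) * (Real.exp (a*s) * w s)
    rw [← mul_assoc, ← Real.exp_add]
    have h : -a*(y-s) = -(a*y)+a*s := by ring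
    rw [h]
  -- the equation for η := BLu b' g
  have heqn : ∀ y ≥ (0:ℝ), BLu b' g y = Real.exp (-a*y) * η₀ +
      (1/ε) * ∫ s in (0:ℝ)..y, Real.exp (-a*(y-s)) * N (BLu b' g s) := by
    intro y hy
    have hy' : ((Real.toNNReal y : NNReal) : ℝ) = y := Real.coe_toNNReal y hy
    have hfx := hfix (Real.toNNReal y)
    unfold BLT at hfx
    rw [hy'] at hfx
    have h9 : BLu b' g y = Real.exp (-(b'*y)) * (g (Real.toNNReal y)) := rfl
    rw [h9, ← hfx, hshift (fun s => N (BLu b' g s)) y]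
    have e3 : Real.exp (-(b'*y)) * Real.exp ((b'-a)*y) = Real.exp (-a*y) := by
      rw [← Real.exp_add]; congr 1; ring
    have e5 : Real.exp (-(a*y)) = Real.exp (-a*y) := by rw [neg_mul]
    calc Real.exp (-(b'*y)) * (Real.exp ((b'-a)*y)
          * (η₀ + ε⁻¹ * ∫ s in (0:ℝ)..y, BLf b' a N g s))
        = (Real.exp (-(b'*y)) * Real.exp ((b'-a)*y))
          * (η₀ + ε⁻¹ * ∫ s in (0:ℝ)..y, BLf b' a N g s) := by ring
      _ = Real.exp (-a*y) * (η₀ + ε⁻¹ * ∫ s in (0:ℝ)..y, BLf b' a N g s) := by rw [e3]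
      _ = Real.exp (-a*y) * η₀
          + (1/ε) * (Real.exp (-(a*y)) * ∫ s in (0:ℝ)..y, Real.exp (a*s) * N (BLu b' g s)) := by
          rw [e5]
          have h10 : (∫ s in (0:ℝ)..y, BLf b' a N g s)
              = ∫ s in (0:ℝ)..y, Real.exp (a*s) * N (BLu b' g s) := rfl
          rw [h10]
          ring
  -- decay bound
  have hbd : ∀ y ≥ (0:ℝ), |BLu b' g y| ≤ 2 * |η₀| * Real.exp (-b * y) := by
    intro y hy
    have heq := heqn y hy
    have hgy : ∀ s : ℝ, |BLu b' g s| ≤ 2*|η₀| * Real.exp (-(b'*s)) := by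
      intro s
      calc |BLu b' g s| ≤ Real.exp (-(b'*s)) * ‖g‖ := BLu_le b' g s
        _ ≤ Real.exp (-(b'*s)) * (2*|η₀|) :=
          mul_le_mul_of_nonneg_left hg2 (Real.exp_pos _).le
        _ = 2*|η₀| * Real.exp (-(b'*s)) := by ring
    have hub : ∀ s : ℝ, 0 ≤ s → |BLu b' g s| ≤ ρ := fun s hs =>
      ((BLu_le' hb'.le g hs).trans hgr).trans hrρ
    have key : ∀ s ∈ Set.Icc (0:ℝ) y, |Real.exp (-a*(y-s)) * N (BLu b' g s)|
        ≤ (2*K*|η₀|^2 * Real.exp (-(b*y))) * Real.exp (-((b/2)*s)) := by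
      intro s hs
      have hs0 : (0:ℝ) ≤ s := hs.1
      have hNu : |N (BLu b' g s)| ≤ (K/2) * (BLu b' g s)^2 := hq _ (hub s hs0)
      have husq : (BLu b' g s)^2
          ≤ (2*|η₀|)^2 * (Real.exp (-(b'*s)) * Real.exp (-(b'*s))) := by
        nlinarith [sq_abs (BLu b' g s), abs_nonneg (BLu b' g s), hgy s,
          Real.exp_pos (-(b'*s)), abs_nonneg η₀]
      rw [abs_mul, abs_of_pos (Real.exp_pos _)]
      calc Real.exp (-a*(y-s)) * |N (BLu b' g s)|
          ≤ Real.exp (-a*(y-s))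
            * ((K/2) * ((2*|η₀|)^2 * (Real.exp (-(b'*s)) * Real.exp (-(b'*s))))) := by
            refine mul_le_mul_of_nonneg_left (hNu.trans ?_) (Real.exp_pos _).le
            exact mul_le_mul_of_nonneg_left husq (by positivity)
        _ = (2*K*|η₀|^2) * (Real.exp (-a*(y-s)) * Real.exp (-(b'*s)) * Real.exp (-(b'*s))) := by
            ring
        _ ≤ (2*K*|η₀|^2) * (Real.exp (-(b*y)) * Real.exp (-((b/2)*s))) := by
            refine mul_le_mul_of_nonneg_left ?_ (by positivity)
            rw [← Real.exp_add, ← Real.exp_add, ← Real.exp_add]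
            refine Real.exp_le_exp.mpr ?_
            nlinarith [mul_nonneg (sub_nonneg.mpr hab) (sub_nonneg.mpr hs.2)]
        _ = (2*K*|η₀|^2 * Real.exp (-(b*y))) * Real.exp (-((b/2)*s)) := by ring
    have hI : |∫ s in (0:ℝ)..y, Real.exp (-a*(y-s)) * N (BLu b' g s)|
        ≤ (2*K*|η₀|^2 * Real.exp (-(b*y))) * (1/(b/2)) := by
      refine (BL_abs_int_le hy
        ((Real.continuous_exp.comp
          (continuous_const.mul (continuous_const.sub continuous_id))).mul
          (hNc.comp (BLu_cont b' g)))
        (continuous_const.mul (Real.continuous_exp.comp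
          ((continuous_const.mul continuous_id).neg))) key).trans ?_
      show ∫ s in (0:ℝ)..y, (2*K*|η₀|^2 * Real.exp (-(b*y))) * Real.exp (-((b/2)*s)) ≤ _
      rw [intervalIntegral.integral_const_mul]
      exact mul_le_mul_of_nonneg_left (BL_int_exp_neg_le (b/2) y (by linarith)) (by positivity)
    rw [heq]
    have step1 : |Real.exp (-a*y) * η₀
        + (1/ε) * ∫ s in (0:ℝ)..y, Real.exp (-a*(y-s)) * N (BLu b' g s)|
        ≤ Real.exp (-a*y)*|η₀|
          + (1/ε) * |∫ s in (0:ℝ)..y, Real.exp (-a*(y-s)) * N (BLu b' g s)| := by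
      refine (abs_add_le _ _).trans ?_
      rw [abs_mul, abs_mul, abs_of_pos (Real.exp_pos _),
        abs_of_pos (by positivity : (0:ℝ) < 1/ε)]
    refine step1.trans ?_
    have hea : Real.exp (-a*y) ≤ Real.exp (-b*y) :=
      Real.exp_le_exp.mpr (by nlinarith)
    have h6 : (1/ε) * |∫ s in (0:ℝ)..y, Real.exp (-a*(y-s)) * N (BLu b' g s)|
        ≤ |η₀| * Real.exp (-b*y) := by
      refine (mul_le_mul_of_nonneg_left hI (by positivity : (0:ℝ) ≤ 1/ε)).trans ?_
      have hexpeq : Real.exp (-(b*y)) = Real.exp (-b*y) := by rw [neg_mul]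
      rw [hexpeq]
      have h7 : (1/ε)*((2*K*|η₀|^2*Real.exp (-b*y))*(1/(b/2)))
          = (4*K*|η₀|^2/(ε*b))*Real.exp (-b*y) := by
        field_simp
        ring
      rw [h7]
      refine mul_le_mul_of_nonneg_right ?_ (Real.exp_pos _).le
      rw [div_le_iff₀ (by positivity)]
      nlinarith [abs_nonneg η₀]
    have h8 : Real.exp (-a*y)*|η₀| ≤ Real.exp (-b*y)*|η₀| :=
      mul_le_mul_of_nonneg_right hea (abs_nonneg _)
    nlinarith [h6, h8]
  refine ⟨BLu b' g, (BLu_cont b' g).continuousOn, heqn, hbd, ?_⟩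
  -- uniqueness
  intro ζ hζc hζeq hζb
  have hζc' : Continuous (fun q : NNReal => ζ (q:ℝ)) :=
    hζc.comp_continuous NNReal.continuous_coe (fun q => q.2)
  have hgzb : ∀ q : NNReal, ‖Real.exp (b'*(q:ℝ)) * ζ (q:ℝ)‖ ≤ 2*|η₀| := by
    intro q
    rw [Real.norm_eq_abs, abs_mul, abs_of_pos (Real.exp_pos _)]
    have h1 := hζb (q:ℝ) q.2
    calc Real.exp (b'*(q:ℝ)) * |ζ (q:ℝ)|
        ≤ Real.exp (b'*(q:ℝ)) * (2 * |η₀| * Real.exp (-b*(q:ℝ))) :=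
        mul_le_mul_of_nonneg_left h1 (Real.exp_pos _).le
      _ = 2 * |η₀| * (Real.exp (b'*(q:ℝ)) * Real.exp (-b*(q:ℝ))) := by ring
      _ ≤ 2 * |η₀| := by
          have he9 : Real.exp (b'*(q:ℝ))*Real.exp (-b*(q:ℝ)) = Real.exp ((b'-b)*(q:ℝ)) := by
            rw [← Real.exp_add]; congr 1; ring
          rw [he9]
          have h2 : Real.exp ((b'-b)*(q:ℝ)) ≤ 1 :=
            Real.exp_le_one_iff.mpr (by nlinarith [mul_nonneg (sub_nonneg.mpr hb'b) q.coe_nonneg])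
          nlinarith [abs_nonneg η₀, Real.exp_pos ((b'-b)*(q:ℝ))]
  set gz : BoundedContinuousFunction NNReal ℝ := BoundedContinuousFunction.ofNormedAddCommGroup
    (fun q : NNReal => Real.exp (b'*(q:ℝ)) * ζ (q:ℝ))
    ((Real.continuous_exp.comp (continuous_const.mul NNReal.continuous_coe)).mul hζc')
    (2*|η₀|) hgzb with hgzdef
  have hgzcoe : ∀ q : NNReal, gz q = Real.exp (b'*(q:ℝ)) * ζ (q:ℝ) := fun q => rfl
  have hgzr : ‖gz‖ ≤ r := by
    refine (BoundedContinuousFunction.norm_le hr.le).mpr fun q => ?_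
    refine (hgzb q).trans ?_
    linarith [hη₀r]
  have hfixz : ∀ q : NNReal, BLT b' a ε η₀ N gz q = gz q := by
    intro q
    have hq0 : (0:ℝ) ≤ (q:ℝ) := q.2
    have hcongr : (∫ s in (0:ℝ)..(q:ℝ), BLf b' a N gz s)
        = ∫ s in (0:ℝ)..(q:ℝ), Real.exp (a*s) * N (ζ s) := by
      apply intervalIntegral.integral_congr
      intro s hs
      rw [Set.uIcc_of_le hq0] at hs
      have hs0 : (0:ℝ) ≤ s := hs.1
      show BLf b' a N gz s = Real.exp (a*s) * N (ζ s)
      have hval : BLu b' gz s = ζ s := by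
        show Real.exp (-(b'*s)) * gz (Real.toNNReal s) = ζ s
        rw [hgzcoe, Real.coe_toNNReal s hs0, ← mul_assoc, ← Real.exp_add,
          show -(b'*s)+b'*s = 0 by ring, Real.exp_zero, one_mul]
      show Real.exp (a*s) * N (BLu b' gz s) = Real.exp (a*s) * N (ζ s)
      rw [hval]
    have hz := hζeq (q:ℝ) hq0
    show Real.exp ((b'-a)*(q:ℝ)) * (η₀ + ε⁻¹ * ∫ s in (0:ℝ)..(q:ℝ), BLf b' a N gz s) = gz q
    rw [hcongr, hgzcoe, hz, hshift (fun s => N (ζ s)) (q:ℝ)]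
    have e4 : Real.exp ((b'-a)*(q:ℝ)) = Real.exp (b'*(q:ℝ)) * Real.exp (-(a*(q:ℝ))) := by
      rw [← Real.exp_add]; congr 1; ring
    have e5 : Real.exp (-(a*(q:ℝ))) = Real.exp (-a*(q:ℝ)) := by rw [neg_mul]
    rw [e4, e5]
    ring
  have hdz : gz = g := by
    have hle : dist gz g ≤ (1/2)*dist gz g := by
      refine (BoundedContinuousFunction.dist_le (by positivity)).mpr fun q => ?_
      rw [Real.dist_eq, ← hfixz q, ← hfix q]
      exact hcontr gz g hgzr hgr q
    have h0' : (0:ℝ) ≤ dist gz g := dist_nonneg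
    have : dist gz g = 0 := by linarith
    rwa [dist_eq_zero] at this
  intro y hy
  have hy' : (0:ℝ) ≤ y := hy
  show ζ y = BLu b' g y
  have h8 : gz (Real.toNNReal y) = g (Real.toNNReal y) := by rw [hdz]
  rw [hgzcoe, Real.coe_toNNReal y hy'] at h8
  show ζ y = Real.exp (-(b'*y)) * g (Real.toNNReal y)
  rw [← h8, ← mul_assoc, ← Real.exp_add, show -(b'*y)+b'*y = 0 by ring,
    Real.exp_zero, one_mul]
end

section
/- Let n ≥ 2 be an integer, δ > 0, ε > 0, μ > 0. For r ≥ 1 and continuous bounded χ : [1,∞) → ℝ, define I₃(r) = (ε(n−1)/μ) ∫_1^r e^{-(δ/(εμ n))(rⁿ − τⁿ)} τ^{n-1} (∫_τ^∞ |χ(s)|/s^{2n-1} ds) dτ. Then I₃(r) ≤ (ε²(n−1)/δ) · ( ∫_r^∞ |χ(s)|/s^{2n-1} ds + (εμ/δ) sup_{s≥1} |χ(s)| ). -/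
open MeasureTheory Set

private lemma aux_pow_sub_pow (n : ℕ) {a b : ℝ} (ha : 1 ≤ a) (hab : a ≤ b) :
    (n : ℝ) * (b - a) ≤ b ^ n - a ^ n := by
  induction n with
  | zero => simp
  | succ m ih =>
    have hb : 1 ≤ b := ha.trans hab
    have h1 : (0:ℝ) ≤ b ^ m - a ^ m := sub_nonneg.2 (pow_le_pow_left₀ (by linarith) hab m)
    have h2 : (1:ℝ) ≤ a ^ m := one_le_pow₀ ha
    have key : b ^ (m+1) - a ^ (m+1) = b * (b ^ m - a ^ m) + a ^ m * (b - a) := by ring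
    have : (b ^ m - a ^ m) + (b - a) ≤ b * (b ^ m - a ^ m) + a ^ m * (b - a) := by
      have := mul_le_mul_of_nonneg_right hb h1
      have := mul_le_mul_of_nonneg_right h2 (by linarith : (0:ℝ) ≤ b - a)
      nlinarith
    push_cast
    nlinarith [ih]

set_option maxHeartbeats 1000000 in
theorem stmt_10 (n : ℕ) (hn : 2 ≤ n) (δ ε μ : ℝ) (hδ : 0 < δ) (hε : 0 < ε) (hμ : 0 < μ)
    (r : ℝ) (hr : 1 ≤ r) (χ : ℝ → ℝ)
    (hcont : ContinuousOn χ (Set.Ici 1))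
    (hbdd : BddAbove (Set.range fun s : Set.Ici (1:ℝ) => |χ s|)) :
    (ε * ((n:ℝ)-1) / μ) *
        ∫ τ in (1:ℝ)..r, Real.exp (-(δ/(ε*μ*n)) * (r^n - τ^n)) * τ^(n-1) *
          (∫ s in Set.Ioi τ, |χ s| / s ^ (2*n-1)) ≤
      (ε^2 * ((n:ℝ)-1) / δ) *
        ((∫ s in Set.Ioi r, |χ s| / s ^ (2*n-1)) +
          (ε*μ/δ) * ⨆ s : Set.Ici (1:ℝ), |χ s|) := by
  have hn0 : (0:ℝ) < n := by positivity
  set a : ℝ := δ/(ε*μ*n) with ha_def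
  have ha : 0 < a := by positivity
  set C : ℝ := ⨆ s : Set.Ici (1:ℝ), |χ s| with hC_def
  have hC : ∀ s : ℝ, 1 ≤ s → |χ s| ≤ C := fun s hs => le_ciSup hbdd ⟨s, hs⟩
  have hC0 : 0 ≤ C := le_trans (abs_nonneg _) (hC 1 le_rfl)
  set g : ℝ → ℝ := fun s => |χ s| / s ^ (2*n-1) with hg_def
  set K : ℝ → ℝ := fun τ => Real.exp (-a * (r^n - τ^n)) with hK_def
  -- integrability of g on Ioi τ for τ ≥ 1
  have hgint : ∀ τ : ℝ, 1 ≤ τ → IntegrableOn g (Ioi τ) := by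
    intro τ hτ
    have hτ0 : (0:ℝ) < τ := lt_of_lt_of_le zero_lt_one hτ
    have hmeas : AEStronglyMeasurable g (volume.restrict (Ioi τ)) := by
      have h1 : AEStronglyMeasurable χ (volume.restrict (Ioi τ)) :=
        (hcont.mono (fun x hx => le_of_lt (lt_of_le_of_lt hτ hx))).aestronglyMeasurable
          measurableSet_Ioi
      have h1' : AEStronglyMeasurable (fun s => |χ s|) (volume.restrict (Ioi τ)) := by
        simpa [Real.norm_eq_abs] using h1.norm
      have h2 : AEMeasurable (fun s : ℝ => s ^ (2*n-1)) (volume.restrict (Ioi τ)) :=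
        (measurable_id.pow_const _).aemeasurable
      exact (h1'.aemeasurable.div h2).aestronglyMeasurable
    have hlt : -(2*(n:ℝ)-1) < -1 := by
      have h2n : (2:ℝ) ≤ (n:ℝ) := by exact_mod_cast hn
      linarith
    have hdom : IntegrableOn (fun s : ℝ => C * s ^ (-(2*(n:ℝ)-1))) (Ioi τ) :=
      (integrableOn_Ioi_rpow_of_lt hlt hτ0).const_mul C
    refine hdom.integrable.mono' hmeas ?_
    filter_upwards [ae_restrict_mem measurableSet_Ioi] with s hs
    have hs1 : (1:ℝ) ≤ s := hτ.trans hs.le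
    have hs0 : (0:ℝ) < s := lt_of_lt_of_le zero_lt_one hs1
    have hpow : s ^ (2*n-1) = s ^ ((2*(n:ℝ)-1)) := by
      rw [← Real.rpow_natCast s (2*n-1)]
      congr 1
      push_cast [Nat.cast_sub (by omega : 1 ≤ 2*n)]
      ring
    have hpowpos : (0:ℝ) < s ^ (2*n-1) := pow_pos hs0 _
    rw [Real.norm_eq_abs, abs_of_nonneg (div_nonneg (abs_nonneg _) hpowpos.le)]
    have hrw : C * s ^ (-(2*(n:ℝ)-1)) = C / s ^ (2*n-1) := by
      rw [Real.rpow_neg hs0.le, ← hpow, div_eq_mul_inv]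
    rw [hrw]
    exact (div_le_div_iff_of_pos_right hpowpos).2 (hC s hs1)
  set F : ℝ → ℝ := fun τ => ∫ s in Ioi τ, g s with hF_def
  have hgnn : ∀ s : ℝ, 0 < s → 0 ≤ g s := fun s hs =>
    div_nonneg (abs_nonneg _) (pow_pos hs _).le
  have hFnn : ∀ τ : ℝ, 0 ≤ τ → 0 ≤ F τ := by
    intro τ hτ
    exact setIntegral_nonneg measurableSet_Ioi fun s hs => hgnn s (lt_of_le_of_lt hτ hs)
  -- split F τ and bound
  have hsplit : ∀ τ ∈ Icc (1:ℝ) r, F τ ≤ C * (r - τ) + F r := by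
    intro τ hτ
    obtain ⟨hτ1, hτr⟩ := hτ
    have hInt : IntegrableOn g (Ioi τ) := hgint τ hτ1
    have hIoc : IntegrableOn g (Ioc τ r) := hInt.mono_set Ioc_subset_Ioi_self
    have hIoi : IntegrableOn g (Ioi r) := hgint r hr
    have heq : F τ = (∫ s in Ioc τ r, g s) + ∫ s in Ioi r, g s := by
      rw [hF_def]
      simp only
      rw [← setIntegral_union (Ioc_disjoint_Ioi le_rfl) measurableSet_Ioi hIoc hIoi,
        Ioc_union_Ioi_eq_Ioi hτr]
    rw [heq]
    have hle : (∫ s in Ioc τ r, g s) ≤ ∫ _s in Ioc τ r, C := by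
      refine setIntegral_mono_on hIoc (integrableOn_const measure_Ioc_lt_top.ne) measurableSet_Ioc ?_
      intro s hs
      have hs1 : (1:ℝ) ≤ s := hτ1.trans hs.1.le
      have h1 : (1:ℝ) ≤ s ^ (2*n-1) := one_le_pow₀ hs1
      calc g s ≤ |χ s| := by
            rw [hg_def]; simp only
            exact div_le_self (abs_nonneg _) h1
        _ ≤ C := hC s hs1
    have hconst : (∫ _s in Ioc τ r, C) = (r - τ) * C := by
      simp [Real.volume_Ioc, ENNReal.toReal_ofReal (by linarith : (0:ℝ) ≤ r - τ)]
      exact Or.inl hτr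
    rw [hconst] at hle
    have : F r = ∫ s in Ioi r, g s := rfl
    nlinarith [hle]
  -- continuity facts
  have hKcont : Continuous K :=
    Real.continuous_exp.comp (continuous_const.mul (continuous_const.sub (continuous_pow n)))
  have hKτcont : Continuous fun τ : ℝ => K τ * τ^(n-1) := hKcont.mul (continuous_pow _)
  have hKτnn : ∀ τ : ℝ, 0 ≤ τ → 0 ≤ K τ * τ^(n-1) := fun τ hτ =>
    mul_nonneg (Real.exp_pos _).le (pow_nonneg hτ _)
  -- interval integrability of LHS integrand
  have hFanti : AntitoneOn F (uIcc 1 r) := by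
    rw [uIcc_of_le hr]
    intro τ1 h1 τ2 h2 h12
    exact setIntegral_mono_set (hgint τ1 h1.1) (by
      filter_upwards [ae_restrict_mem measurableSet_Ioi] with s hs using
        hgnn s (lt_of_le_of_lt (lt_of_lt_of_le zero_lt_one h1.1).le hs))
      ((Ioi_subset_Ioi h12).eventuallyLE)
  have hFint : IntervalIntegrable F volume 1 r := hFanti.intervalIntegrable
  have hLHSint : IntervalIntegrable (fun τ => K τ * τ^(n-1) * F τ) volume 1 r :=
    hFint.continuousOn_mul (hKτcont.continuousOn)
  have hRHSint : IntervalIntegrable (fun τ => K τ * τ^(n-1) * (C * (r - τ) + F r)) volume 1 r :=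
    Continuous.intervalIntegrable (hKτcont.mul
      ((continuous_const.mul (continuous_const.sub continuous_id)).add continuous_const)) 1 r
  -- step 1 : pointwise bound and integral mono
  have step1 : (∫ τ in (1:ℝ)..r, K τ * τ^(n-1) * F τ) ≤
      ∫ τ in (1:ℝ)..r, K τ * τ^(n-1) * (C * (r - τ) + F r) := by
    refine intervalIntegral.integral_mono_on hr hLHSint hRHSint ?_
    intro τ hτ
    exact mul_le_mul_of_nonneg_left (hsplit τ hτ) (hKτnn τ (by linarith [hτ.1]))
  -- FTC computations
  have hna : (n:ℝ) * a = δ / (ε * μ) := by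
    rw [ha_def]; field_simp
  have hinv : 1 / ((n:ℝ) * a) = ε * μ / δ := by
    rw [hna]; field_simp
  have hderiv1 : ∀ τ : ℝ, HasDerivAt (fun x => 1/((n:ℝ)*a) * K x) (K τ * τ^(n-1)) τ := by
    intro τ
    have hv : HasDerivAt (fun x : ℝ => -a * (r^n - x^n)) (a * n * τ^(n-1)) τ := by
      have h1 : HasDerivAt (fun x : ℝ => r^n - x^n) (-(n * τ^(n-1))) τ := by
        simpa using (hasDerivAt_pow n τ).const_sub (r^n)
      have := h1.const_mul (-a)
      exact this.congr_deriv (by ring)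
    have := hv.exp.const_mul (1/((n:ℝ)*a))
    refine this.congr_deriv ?_
    rw [hK_def]
    field_simp
  have hA : (∫ τ in (1:ℝ)..r, K τ * τ^(n-1)) ≤ ε * μ / δ := by
    rw [intervalIntegral.integral_eq_sub_of_hasDerivAt
      (fun τ _ => hderiv1 τ) ((hKτcont.intervalIntegrable 1 r))]
    have h1 : K r = 1 := by rw [hK_def]; simp
    have h2 : 0 < K 1 := Real.exp_pos _
    rw [h1, hinv]
    nlinarith [mul_pos (div_pos (mul_pos hε hμ) hδ) h2]
  -- second antiderivative
  have hderiv2 : ∀ τ : ℝ, HasDerivAt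
      (fun x => 1/((n:ℝ)*a) * ((r^n - x^n + 1/a) * K x))
      (K τ * τ^(n-1) * (r^n - τ^n)) τ := by
    intro τ
    have hpow : HasDerivAt (fun x : ℝ => r^n - x^n) (-(n * τ^(n-1))) τ := by
      simpa using (hasDerivAt_pow n τ).const_sub (r^n)
    have hv : HasDerivAt (fun x : ℝ => -a * (r^n - x^n)) (a * n * τ^(n-1)) τ := by
      have := hpow.const_mul (-a)
      exact this.congr_deriv (by ring)
    have hKd : HasDerivAt K (K τ * (a * n * τ^(n-1))) τ := hv.exp
    have := ((hpow.add_const (1/a)).mul hKd).const_mul (1/((n:ℝ)*a))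
    refine this.congr_deriv ?_
    field_simp
    ring
  have hB2 : (∫ τ in (1:ℝ)..r, K τ * τ^(n-1) * (r^n - τ^n)) ≤ (ε*μ/δ) / a := by
    rw [intervalIntegral.integral_eq_sub_of_hasDerivAt (fun τ _ => hderiv2 τ)
      ((hKτcont.mul (continuous_const.sub (continuous_pow n))).intervalIntegrable 1 r)]
    have h1 : K r = 1 := by rw [hK_def]; simp
    have h2 : 0 < K 1 := Real.exp_pos _
    have h1r : (1:ℝ) ≤ r ^ n := one_le_pow₀ hr
    have h3 : (0:ℝ) ≤ r^n - 1^n := by simp; linarith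
    have h4 : (0:ℝ) ≤ (r^n - 1^n + 1/a) * K 1 := mul_nonneg (by positivity) h2.le
    have h5 : (0:ℝ) ≤ 1/((n:ℝ)*a) * ((r^n - 1^n + 1/a) * K 1) :=
      mul_nonneg (by positivity) h4
    rw [h1]
    have heq0 : 1/((n:ℝ)*a) * ((r^n - r^n + 1/a) * 1) = (ε*μ/δ)/a := by
      rw [← hinv]; field_simp; ring
    linarith
  -- bound B' by hB2
  have hB' : (∫ τ in (1:ℝ)..r, K τ * τ^(n-1) * (r - τ)) ≤ (ε*μ/δ)^2 := by
    have hmono : (∫ τ in (1:ℝ)..r, K τ * τ^(n-1) * (r - τ)) ≤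
        ∫ τ in (1:ℝ)..r, K τ * τ^(n-1) * ((r^n - τ^n)/n) := by
      refine intervalIntegral.integral_mono_on hr
        (Continuous.intervalIntegrable (hKτcont.mul (continuous_const.sub continuous_id)) 1 r)
        (Continuous.intervalIntegrable (hKτcont.mul
          ((continuous_const.sub (continuous_pow n)).div_const _)) 1 r) ?_
      intro τ hτ
      refine mul_le_mul_of_nonneg_left ?_ (hKτnn τ (by linarith [hτ.1]))
      rw [le_div_iff₀ hn0]
      have := aux_pow_sub_pow n hτ.1 hτ.2
      linarith
    have heq : (∫ τ in (1:ℝ)..r, K τ * τ^(n-1) * ((r^n - τ^n)/n)) =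
        (1/(n:ℝ)) * ∫ τ in (1:ℝ)..r, K τ * τ^(n-1) * (r^n - τ^n) := by
      rw [← intervalIntegral.integral_const_mul]
      congr 1; ext τ; ring
    have hfin : (1/(n:ℝ)) * ((ε*μ/δ)/a) = (ε*μ/δ)^2 := by
      have : (ε*μ/δ) = 1/((n:ℝ)*a) := hinv.symm
      rw [this]; field_simp
    calc (∫ τ in (1:ℝ)..r, K τ * τ^(n-1) * (r - τ))
        ≤ (1/(n:ℝ)) * ∫ τ in (1:ℝ)..r, K τ * τ^(n-1) * (r^n - τ^n) := by
          rw [← heq]; exact hmono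
      _ ≤ (1/(n:ℝ)) * ((ε*μ/δ)/a) := by
          exact mul_le_mul_of_nonneg_left hB2 (by positivity)
      _ = (ε*μ/δ)^2 := hfin
  -- expand RHS integral
  have hexpand : (∫ τ in (1:ℝ)..r, K τ * τ^(n-1) * (C * (r - τ) + F r)) =
      C * (∫ τ in (1:ℝ)..r, K τ * τ^(n-1) * (r - τ)) +
      F r * (∫ τ in (1:ℝ)..r, K τ * τ^(n-1)) := by
    have hi1 : IntervalIntegrable (fun τ => C * (K τ * τ^(n-1) * (r - τ))) volume 1 r :=
      Continuous.intervalIntegrable (continuous_const.mul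
        (hKτcont.mul (continuous_const.sub continuous_id'))) 1 r
    have hi2 : IntervalIntegrable (fun τ => F r * (K τ * τ^(n-1))) volume 1 r :=
      Continuous.intervalIntegrable (continuous_const.mul hKτcont) 1 r
    rw [← intervalIntegral.integral_const_mul, ← intervalIntegral.integral_const_mul,
      ← intervalIntegral.integral_add hi1 hi2]
    congr 1; ext τ; ring
  -- combine
  have hFr : 0 ≤ F r := hFnn r (by linarith)
  have hmain : (∫ τ in (1:ℝ)..r, K τ * τ^(n-1) * F τ) ≤
      F r * (ε*μ/δ) + C * (ε*μ/δ)^2 := by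
    calc (∫ τ in (1:ℝ)..r, K τ * τ^(n-1) * F τ)
        ≤ ∫ τ in (1:ℝ)..r, K τ * τ^(n-1) * (C * (r - τ) + F r) := step1
      _ = C * (∫ τ in (1:ℝ)..r, K τ * τ^(n-1) * (r - τ)) +
          F r * (∫ τ in (1:ℝ)..r, K τ * τ^(n-1)) := hexpand
      _ ≤ C * (ε*μ/δ)^2 + F r * (ε*μ/δ) :=
          add_le_add (mul_le_mul_of_nonneg_left hB' hC0)
            (mul_le_mul_of_nonneg_left hA hFr)
      _ = F r * (ε*μ/δ) + C * (ε*μ/δ)^2 := by ring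
  have hcoef : (0:ℝ) ≤ ε * ((n:ℝ)-1) / μ := by
    have h1n : (1:ℝ) ≤ (n:ℝ) := by exact_mod_cast Nat.one_le_of_lt hn
    apply div_nonneg _ hμ.le
    nlinarith
  calc (ε * ((n:ℝ)-1) / μ) *
        ∫ τ in (1:ℝ)..r, Real.exp (-(δ/(ε*μ*n)) * (r^n - τ^n)) * τ^(n-1) *
          (∫ s in Set.Ioi τ, |χ s| / s ^ (2*n-1))
      ≤ (ε * ((n:ℝ)-1) / μ) * (F r * (ε*μ/δ) + C * (ε*μ/δ)^2) := by
        exact mul_le_mul_of_nonneg_left hmain hcoef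
    _ = (ε^2 * ((n:ℝ)-1) / δ) * (F r + (ε*μ/δ) * C) := by
        field_simp
    _ = (ε^2 * ((n:ℝ)-1) / δ) *
        ((∫ s in Set.Ioi r, |χ s| / s ^ (2*n-1)) +
          (ε*μ/δ) * ⨆ s : Set.Ici (1:ℝ), |χ s|) := rfl
end
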